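/- Let S be a closed connected LNE subset of the unit sphere S^{n-1} in R^n, and let Ŝ⁺ be the non-negative cone over S with vertex 0. Then for any R > 0, the truncated cone Ŝ⁺ ∩ {x : |x| ≤ R} is Lipschitz normally embedded. -/

import Mathlib

open scoped ENNReal

open scoped RealInnerProductSpace

set_option maxHeartbeats 1000000

noncomputable def pathLength {E : Type*} [PseudoEMetricSpace E] (γ : ℝ → E) : ℝ≥0∞ :=
  eVariationOn γ (Set.Icc 0 1)

noncomputable def innerDist {E : Type*} [PseudoEMetricSpace E] (S : Set E) (x y : E) : ℝ≥0∞ :=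
  ⨅ (γ : ℝ → E) (_ : ContinuousOn γ (Set.Icc 0 1)) (_ : γ 0 = x) (_ : γ 1 = y)
    (_ : γ '' Set.Icc 0 1 ⊆ S), pathLength γ

lemma innerDist_le {E : Type*} [PseudoEMetricSpace E] {S : Set E} {x y : E} {γ : ℝ → E}
    (hc : ContinuousOn γ (Set.Icc 0 1)) (h0 : γ 0 = x) (h1 : γ 1 = y)
    (him : γ '' Set.Icc 0 1 ⊆ S) : innerDist S x y ≤ pathLength γ :=
  iInf_le_of_le γ <| iInf_le_of_le hc <| iInf_le_of_le h0 <| iInf_le_of_le h1 <|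
    iInf_le_of_le him le_rfl

lemma exists_path_of_lt {E : Type*} [PseudoEMetricSpace E] {S : Set E} {x y : E} {B : ℝ≥0∞}
    (h : innerDist S x y < B) : ∃ γ : ℝ → E, ContinuousOn γ (Set.Icc 0 1) ∧ γ 0 = x ∧ γ 1 = y ∧
      γ '' Set.Icc 0 1 ⊆ S ∧ pathLength γ < B := by
  simp only [innerDist, iInf_lt_iff] at h
  obtain ⟨γ, hc, h0, h1, him, hlt⟩ := h
  exact ⟨γ, hc, h0, h1, him, hlt⟩

lemma continuousOn_union_closed {X Y : Type*} [TopologicalSpace X] [TopologicalSpace Y]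
    {f : X → Y} {s t : Set X} (hs : IsClosed s) (ht : IsClosed t)
    (hfs : ContinuousOn f s) (hft : ContinuousOn f t) : ContinuousOn f (s ∪ t) := by
  intro x hx
  have hcs : ContinuousWithinAt f s x := by
    by_cases hxs : x ∈ s
    · exact hfs x hxs
    · exact continuousWithinAt_of_notMem_closure (by rwa [hs.closure_eq])
  have hct : ContinuousWithinAt f t x := by
    by_cases hxt : x ∈ t
    · exact hft x hxt
    · exact continuousWithinAt_of_notMem_closure (by rwa [ht.closure_eq])
  exact hcs.union hct

lemma innerDist_comm {E : Type*} [PseudoEMetricSpace E] (S : Set E) (x y : E) :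
    innerDist S x y = innerDist S y x := by
  have key : ∀ a b : E, innerDist S a b ≤ innerDist S b a := by
    intro a b
    refine le_iInf fun γ => le_iInf fun hc => le_iInf fun h0 => le_iInf fun h1 =>
      le_iInf fun him => ?_
    have himg : (fun θ : ℝ => 1 - θ) '' Set.Icc 0 1 = Set.Icc 0 1 := by
      rw [Set.image_const_sub_Icc]; norm_num
    have hmaps : Set.MapsTo (fun θ : ℝ => 1 - θ) (Set.Icc 0 1) (Set.Icc 0 1) := by
      intro p hp; rw [← himg]; exact Set.mem_image_of_mem _ hp
    have hanti : AntitoneOn (fun θ : ℝ => 1 - θ) (Set.Icc 0 1) :=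
      fun p _ q _ hpq => by simp only; linarith
    have hvar : pathLength (γ ∘ fun θ : ℝ => 1 - θ) = pathLength γ := by
      unfold pathLength
      rw [eVariationOn.comp_eq_of_antitoneOn γ _ hanti, himg]
    calc innerDist S a b ≤ pathLength (γ ∘ fun θ : ℝ => 1 - θ) := by
          refine innerDist_le (hc.comp (by fun_prop) hmaps) (by simp [h1]) (by simp [h0]) ?_
          rw [Set.image_comp, himg]; exact him
      _ = pathLength γ := hvar
  exact le_antisymm (key x y) (key y x)

def IsLNEWith {E : Type*} [NormedAddCommGroup E] (L : ℝ) (S : Set E) : Prop :=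
  ∀ x ∈ S, ∀ y ∈ S, innerDist S x y ≤ ENNReal.ofReal (L * dist x y)

def IsLNE {E : Type*} [NormedAddCommGroup E] (S : Set E) : Prop :=
  ∃ L > 0, IsLNEWith L S

def nonnegCone {n : ℕ} (S : Set (EuclideanSpace ℝ (Fin n))) : Set (EuclideanSpace ℝ (Fin n)) :=
  {x | ∃ t : ℝ, 0 ≤ t ∧ ∃ u ∈ S, x = t • u}

lemma key_lemma {n : ℕ} {S : Set (EuclideanSpace ℝ (Fin n))}
    (hS : S ⊆ Metric.sphere (0 : EuclideanSpace ℝ (Fin n)) 1)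
    {L R : ℝ} (hL : 0 ≤ L) (h : IsLNEWith L S)
    {t s : ℝ} {u v : EuclideanSpace ℝ (Fin n)} (hu : u ∈ S) (hv : v ∈ S)
    (ht : 0 ≤ t) (hts : t ≤ s) (hsR : s ≤ R) :
    innerDist (nonnegCone S ∩ {x | ‖x‖ ≤ R}) (t • u) (s • v) ≤
      ENNReal.ofReal ((1 + L) * dist (t • u) (s • v)) := by
  have hs0 : 0 ≤ s := ht.trans hts
  have hnu : ‖u‖ = 1 := by simpa using mem_sphere_zero_iff_norm.mp (hS hu)
  have hnv : ‖v‖ = 1 := by simpa using mem_sphere_zero_iff_norm.mp (hS hv)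
  set d := dist (t • u) (s • v) with hd
  have hd0 : 0 ≤ d := dist_nonneg
  -- |s - t| ≤ d
  have hd1 : s - t ≤ d := by
    have h1 : ‖s • v‖ - ‖t • u‖ ≤ ‖s • v - t • u‖ := norm_sub_norm_le _ _
    have h2 : ‖s • v‖ = s := by rw [norm_smul, hnv]; simp [abs_of_nonneg hs0]
    have h3 : ‖t • u‖ = t := by rw [norm_smul, hnu]; simp [abs_of_nonneg ht]
    have h4 : ‖s • v - t • u‖ = d := by rw [hd, dist_eq_norm, ← norm_neg]; congr 1; abel
    linarith
  -- t * dist u v ≤ d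
  have hd2 : t * dist u v ≤ d := by
    have hc : (inner ℝ u v : ℝ) ≤ 1 := by
      have := real_inner_le_norm u v
      rwa [hnu, hnv, one_mul] at this
    have e1 : d ^ 2 = t ^ 2 - 2 * (t * s * (inner ℝ u v : ℝ)) + s ^ 2 := by
      rw [hd, dist_eq_norm, norm_sub_sq_real, norm_smul, norm_smul, hnu, hnv,
        real_inner_smul_left, real_inner_smul_right]
      simp [abs_of_nonneg ht, abs_of_nonneg hs0]; ring
    have e2 : dist u v ^ 2 = 2 - 2 * (inner ℝ u v : ℝ) := by
      rw [dist_eq_norm, norm_sub_sq_real, hnu, hnv]; ring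
    have hsq : (t * dist u v) ^ 2 ≤ d ^ 2 := by nlinarith [mul_nonneg ht (sub_nonneg.2 hts)]
    have := Real.sqrt_le_sqrt hsq
    rwa [Real.sqrt_sq (by positivity), Real.sqrt_sq hd0] at this
  refine ENNReal.le_of_forall_pos_le_add fun ε hε _ => ?_
  set ε' : ℝ := ε / (t + 1) with hε'
  have hε'0 : 0 < ε' := by positivity
  have hlt : innerDist S u v < ENNReal.ofReal (L * dist u v) + ENNReal.ofReal ε' :=
    lt_of_le_of_lt (h u hu v hv)
      (ENNReal.lt_add_right ENNReal.ofReal_ne_top (ENNReal.ofReal_pos.2 hε'0).ne')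
  obtain ⟨σ, hσc, hσ0, hσ1, hσim, hσlen⟩ := exists_path_of_lt hlt
  set f1 : ℝ → EuclideanSpace ℝ (Fin n) := fun θ => t • σ (2 * θ) with hf1
  set f2 : ℝ → EuclideanSpace ℝ (Fin n) := fun θ => ((2 * θ - 1) * (s - t) + t) • v with hf2
  set γ : ℝ → EuclideanSpace ℝ (Fin n) :=
    fun θ => if θ ≤ 1 / 2 then f1 θ else f2 θ with hγ
  have heq1 : Set.EqOn γ f1 (Set.Icc 0 (1 / 2)) := fun θ hθ => if_pos hθ.2
  have heq2 : Set.EqOn γ f2 (Set.Icc (1 / 2) 1) := by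
    intro θ hθ
    rcases eq_or_lt_of_le hθ.1 with hq | hq
    · have : γ θ = f1 θ := if_pos (le_of_eq hq.symm)
      rw [this, hf1, hf2, ← hq]
      norm_num [hσ1]
    · exact if_neg (not_le.2 hq)
  have hmaps2 : Set.MapsTo (fun θ : ℝ => 2 * θ) (Set.Icc 0 (1 / 2)) (Set.Icc 0 1) := by
    intro θ hθ
    simp only [Set.mem_Icc] at hθ ⊢
    constructor <;> linarith
  have hc1 : ContinuousOn f1 (Set.Icc 0 (1 / 2)) :=
    (hσc.comp (by fun_prop) hmaps2).const_smul t
  have hc2 : Continuous f2 := by fun_prop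
  have hγc : ContinuousOn γ (Set.Icc 0 1) := by
    have : Set.Icc (0 : ℝ) 1 = Set.Icc 0 (1 / 2) ∪ Set.Icc (1 / 2) 1 :=
      (Set.Icc_union_Icc_eq_Icc (by norm_num) (by norm_num)).symm
    rw [this]
    exact continuousOn_union_closed isClosed_Icc isClosed_Icc
      (hc1.congr heq1) (hc2.continuousOn.congr heq2)
  have hγ0 : γ 0 = t • u := by
    have : γ 0 = f1 0 := if_pos (by norm_num)
    rw [this, hf1]; norm_num [hσ0]
  have hγ1 : γ 1 = s • v := by
    have : γ 1 = f2 1 := if_neg (by norm_num)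
    rw [this, hf2]; norm_num
  have hγim : γ '' Set.Icc 0 1 ⊆ nonnegCone S ∩ {x | ‖x‖ ≤ R} := by
    rintro z ⟨θ, hθ, rfl⟩
    by_cases hc : θ ≤ 1 / 2
    · have hmemI : θ ∈ Set.Icc (0:ℝ) (1/2) := ⟨hθ.1, hc⟩
      have hmem : σ (2 * θ) ∈ S :=
        hσim (Set.mem_image_of_mem σ ⟨by linarith [hθ.1], by linarith⟩)
      have hn1 : ‖σ (2 * θ)‖ = 1 := by simpa using mem_sphere_zero_iff_norm.mp (hS hmem)
      have hval : γ θ = t • σ (2 * θ) := heq1 hmemI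
      refine ⟨⟨t, ht, σ (2 * θ), hmem, hval⟩, ?_⟩
      rw [Set.mem_setOf_eq, hval]
      simp only [norm_smul, hn1, Real.norm_eq_abs, abs_of_nonneg ht, mul_one]
      linarith
    · push_neg at hc
      set r : ℝ := (2 * θ - 1) * (s - t) + t with hr
      have hr0 : 0 ≤ r := by nlinarith [hθ.2]
      have hrs : r ≤ s := by nlinarith [hθ.2]
      have hval : γ θ = ((2 * θ - 1) * (s - t) + t) • v := heq2 ⟨hc.le, hθ.2⟩
      refine ⟨⟨r, hr0, v, hv, by rw [hval, hr]⟩, ?_⟩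
      rw [Set.mem_setOf_eq, hval]
      simp only [norm_smul, hnv, Real.norm_eq_abs, abs_of_nonneg hr0, mul_one]
      exact abs_le.2 ⟨by linarith, by linarith⟩
  -- variation bounds
  have hsplit : eVariationOn γ (Set.Icc 0 (1 / 2)) + eVariationOn γ (Set.Icc (1 / 2) 1) =
      eVariationOn γ (Set.Icc 0 1) := by
    have := eVariationOn.Icc_add_Icc γ (s := Set.univ)
      (by norm_num : (0 : ℝ) ≤ 1 / 2) (by norm_num : (1 : ℝ) / 2 ≤ 1) (Set.mem_univ _)
    simpa using this
  have hp1 : eVariationOn γ (Set.Icc 0 (1 / 2)) ≤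
      ENNReal.ofReal (L * d) + ENNReal.ofReal (ε : ℝ) := by
    rw [eVariationOn.eq_of_eqOn heq1]
    have himg : (fun θ : ℝ => 2 * θ) '' Set.Icc 0 (1 / 2) = Set.Icc 0 1 := by
      ext x
      constructor
      · rintro ⟨θ, hθ, rfl⟩
        simp only [Set.mem_Icc] at hθ ⊢
        constructor <;> linarith
      · intro hx
        simp only [Set.mem_Icc] at hx
        exact ⟨x / 2, ⟨by linarith, by linarith⟩, by ring⟩
    have hmono : MonotoneOn (fun θ : ℝ => 2 * θ) (Set.Icc 0 (1 / 2)) :=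
      fun p _ q _ hpq => by simp only; linarith
    have hcomp : f1 = ((fun w : EuclideanSpace ℝ (Fin n) => t • w) ∘ σ) ∘ fun θ : ℝ => 2 * θ :=
      rfl
    rw [hcomp, eVariationOn.comp_eq_of_monotoneOn _ _ hmono, himg]
    have hlip : eVariationOn ((fun w : EuclideanSpace ℝ (Fin n) => t • w) ∘ σ) (Set.Icc 0 1) ≤
        (‖t‖₊ : ℝ≥0∞) * eVariationOn σ (Set.Icc 0 1) :=
      ((lipschitzWith_smul t).lipschitzOnWith (s := Set.univ)).comp_eVariationOn_le
        (Set.mapsTo_univ _ _)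
    refine hlip.trans ?_
    rw [show (‖t‖₊ : ℝ≥0∞) = ENNReal.ofReal t from Real.enorm_eq_ofReal ht]
    calc ENNReal.ofReal t * eVariationOn σ (Set.Icc 0 1)
        ≤ ENNReal.ofReal t * (ENNReal.ofReal (L * dist u v) + ENNReal.ofReal ε') :=
          mul_le_mul_right hσlen.le _
      _ = ENNReal.ofReal (t * (L * dist u v)) + ENNReal.ofReal (t * ε') := by
          rw [mul_add, ← ENNReal.ofReal_mul ht, ← ENNReal.ofReal_mul ht]
      _ ≤ ENNReal.ofReal (L * d) + ENNReal.ofReal (ε : ℝ) := by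
          refine add_le_add (ENNReal.ofReal_le_ofReal ?_) (ENNReal.ofReal_le_ofReal ?_)
          · calc t * (L * dist u v) = L * (t * dist u v) := by ring
              _ ≤ L * d := mul_le_mul_of_nonneg_left hd2 hL
          · have h1 : t * ε' ≤ (t + 1) * ε' :=
              mul_le_mul_of_nonneg_right (by linarith) hε'0.le
            have h2 : (t + 1) * ε' = (ε : ℝ) := by
              rw [hε']; field_simp
            linarith
  have hp2 : eVariationOn γ (Set.Icc (1 / 2) 1) ≤ ENNReal.ofReal d := by
    rw [eVariationOn.eq_of_eqOn heq2]
    set ψ : ℝ → ℝ := fun θ => (2 * θ - 1) * (s - t) + t with hψ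
    have hlipv : LipschitzWith 1 (fun r : ℝ => r • v) := by
      refine LipschitzWith.of_dist_le_mul fun a b => ?_
      rw [dist_eq_norm, ← sub_smul, norm_smul, hnv, mul_one]
      simp [Real.dist_eq]
    have hcomp : f2 = (fun r : ℝ => r • v) ∘ ψ := rfl
    have hlip : eVariationOn f2 (Set.Icc (1 / 2) 1) ≤
        (1 : ℝ≥0∞) * eVariationOn ψ (Set.Icc (1 / 2) 1) := by
      rw [hcomp]
      exact (hlipv.lipschitzOnWith (s := Set.univ)).comp_eVariationOn_le (Set.mapsTo_univ _ _)
    rw [one_mul] at hlip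
    refine hlip.trans ?_
    have hmono : MonotoneOn ψ Set.univ := fun p _ q _ hpq => by
      simp only [hψ]; nlinarith
    have := hmono.eVariationOn_le (Set.mem_univ (1 / 2 : ℝ)) (Set.mem_univ (1 : ℝ))
    simp only [Set.univ_inter] at this
    refine this.trans (ENNReal.ofReal_le_ofReal ?_)
    simp only [hψ]; norm_num; linarith
  calc innerDist (nonnegCone S ∩ {x | ‖x‖ ≤ R}) (t • u) (s • v) ≤ pathLength γ :=
        innerDist_le hγc hγ0 hγ1 hγim
    _ = eVariationOn γ (Set.Icc 0 (1 / 2)) + eVariationOn γ (Set.Icc (1 / 2) 1) := by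
        rw [pathLength, ← hsplit]
    _ ≤ (ENNReal.ofReal (L * d) + ENNReal.ofReal (ε : ℝ)) + ENNReal.ofReal d :=
        add_le_add hp1 hp2
    _ = ENNReal.ofReal ((1 + L) * d) + ε := by
        rw [show (1 + L) * d = L * d + d by ring,
          ENNReal.ofReal_add (by positivity) hd0, ENNReal.ofReal_coe_nnreal]
        ring

theorem truncated_cone_LNE {n : ℕ} (S : Set (EuclideanSpace ℝ (Fin n)))
    (hS : S ⊆ Metric.sphere (0 : EuclideanSpace ℝ (Fin n)) 1)
    (hclosed : IsClosed S) (hconn : IsConnected S) (hLNE : IsLNE S)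
    (R : ℝ) (hR : 0 < R) :
    IsLNE (nonnegCone S ∩ {x | ‖x‖ ≤ R}) := by
  obtain ⟨L, hL, hLNEW⟩ := hLNE
  refine ⟨1 + L, by linarith, ?_⟩
  rintro x ⟨⟨t, ht, u, hu, rfl⟩, hxR⟩ y ⟨⟨s, hs, v, hv, rfl⟩, hyR⟩
  have hnu : ‖u‖ = 1 := by simpa using mem_sphere_zero_iff_norm.mp (hS hu)
  have hnv : ‖v‖ = 1 := by simpa using mem_sphere_zero_iff_norm.mp (hS hv)
  have htR : t ≤ R := by
    rw [Set.mem_setOf_eq, norm_smul, hnu, mul_one, Real.norm_eq_abs, abs_of_nonneg ht] at hxR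
    exact hxR
  have hsR : s ≤ R := by
    rw [Set.mem_setOf_eq, norm_smul, hnv, mul_one, Real.norm_eq_abs, abs_of_nonneg hs] at hyR
    exact hyR
  rcases le_total t s with hts | hst
  · exact key_lemma hS hL.le hLNEW hu hv ht hts hsR
  · rw [innerDist_comm, dist_comm]
    exact key_lemma hS hL.le hLNEW hv hu hs hst htR
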